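/- Let 𝓜 be the set of 21 lines of PG(5,3) consisting of the six lines m₁,…,m₆ together with the fifteen lines represented by [[1,0,2,2,2,2],[0,1,0,2,0,2]], [[1,0,0,0,0,1],[0,1,0,0,2,1]], [[1,0,1,0,2,2],[0,1,0,1,0,2]], [[0,0,1,0,1,2],[0,0,0,1,1,0]], [[1,0,0,2,1,0],[0,1,1,1,0,1]], [[0,0,1,0,1,1],[0,0,0,1,2,0]], [[1,0,2,0,0,0],[0,1,2,2,0,0]], [[1,0,1,2,0,0],[0,1,1,0,0,0]], [[1,0,1,0,0,0],[0,1,0,1,0,0]], [[1,0,2,0,2,0],[0,1,2,2,2,2]], [[1,0,0,0,1,0],[0,1,0,0,0,1]], [[0,0,1,0,1,0],[0,0,0,1,0,1]], [[1,0,0,0,2,2],[0,1,0,0,0,2]], [[1,0,2,0,1,0],[0,1,2,2,0,1]], [[1,0,1,0,1,1],[0,1,0,1,2,0]]. Then 𝓜 has exactly 21 elements, its elements are pairwise disjoint (ℓ ∩ m = 0 for distinct ℓ, m ∈ 𝓜), and every two not necessarily distinct elements of 𝓜 are opposite with respect to M₆ (ℓ ∩ m^⊥ = 0 for all ℓ,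 m ∈ 𝓜); i.e., 𝓜 is a perp-system of PG(5,3) with respect to the symplectic polarity of M₆. -/
import Mathlib


open Matrix

abbrev F3 := ZMod 3
abbrev V6 := Fin 6 → F3

/-- The line (2-dim subspace) represented by a 2×6 matrix: the span of its rows. -/
def lineOf (A : Matrix (Fin 2) (Fin 6) F3) : Submodule F3 V6 :=
  Submodule.span F3 (Set.range A)

/-- The perp of a subspace `W` with respect to a 6×6 Gram matrix `M`:
`{x | xᵀ M w = 0 for all w ∈ W}`. -/
def perp (M : Matrix (Fin 6) (Fin 6) F3) (W : Submodule F3 V6) : Submodule F3 V6 where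
  carrier := {x | ∀ w ∈ W, x ⬝ᵥ M.mulVec w = 0}
  add_mem' := by
    intro a b ha hb w hw
    simp only [Set.mem_setOf_eq] at *
    rw [add_dotProduct, ha w hw, hb w hw, add_zero]
  zero_mem' := by
    intro w hw
    exact zero_dotProduct _
  smul_mem' := by
    intro c x hx w hw
    simp only [Set.mem_setOf_eq] at *
    rw [smul_dotProduct, hx w hw, smul_zero]

/-- A 2×6 matrix built from three 2×2 blocks. -/
def blk3 (A B C : Matrix (Fin 2) (Fin 2) F3) : Matrix (Fin 2) (Fin 6) F3 :=
  Matrix.of fun i j => ![A, B, C] ⟨(j : ℕ) / 2, by omega⟩ i ⟨(j : ℕ) % 2, by omega⟩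

/-- A 6×6 matrix built from nine 2×2 blocks. -/
def blk33 (M : Matrix (Fin 3) (Fin 3) (Matrix (Fin 2) (Fin 2) F3)) :
    Matrix (Fin 6) (Fin 6) F3 :=
  Matrix.of fun i j =>
    M ⟨(i : ℕ) / 2, by omega⟩ ⟨(j : ℕ) / 2, by omega⟩ ⟨(i : ℕ) % 2, by omega⟩ ⟨(j : ℕ) % 2, by omega⟩

/-- The 2×2 block of a 6×6 matrix in block-position `(i, j)`. -/
def blkAt (M : Matrix (Fin 6) (Fin 6) F3) (i j : Fin 3) : Matrix (Fin 2) (Fin 2) F3 :=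
  Matrix.of fun a b => M ⟨2 * (i : ℕ) + (a : ℕ), by omega⟩ ⟨2 * (j : ℕ) + (b : ℕ), by omega⟩

/-- Two (not necessarily distinct) lines are opposite w.r.t. `M` if `ℓ ∩ m^⊥ = 0`. -/
def Opp (M : Matrix (Fin 6) (Fin 6) F3) (ℓ m : Submodule F3 V6) : Prop :=
  ℓ ⊓ perp M m = ⊥

/-- The six lines `m₁, …, m₆`. -/
def mline : Fin 6 → Submodule F3 V6 :=
  ![lineOf !![1, 0, 1, 2, 2, 0; 0, 1, 1, 0, 2, 2],
    lineOf !![1, 0, 1, 2, 1, 1; 0, 1, 1, 0, 2, 0],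
    lineOf !![1, 0, 0, 2, 0, 1; 0, 1, 1, 1, 2, 1],
    lineOf !![1, 0, 0, 2, 2, 0; 0, 1, 1, 1, 2, 2],
    lineOf !![1, 0, 2, 2, 1, 1; 0, 1, 0, 2, 2, 0],
    lineOf !![1, 0, 2, 2, 0, 1; 0, 1, 0, 2, 2, 1]]

/-- The Gram matrix `M₆`. -/
def M6 : Matrix (Fin 6) (Fin 6) F3 :=
  !![0, 0, 2, 2, 0, 0;
     0, 0, 0, 0, 1, 1;
     1, 0, 0, 0, 0, 0;
     1, 0, 0, 0, 1, 0;
     0, 2, 0, 2, 0, 0;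
     0, 2, 0, 0, 0, 0]

/-- The fifteen lines `F₁₅`. -/
def f15 : Fin 15 → Submodule F3 V6 :=
  ![lineOf !![1, 0, 2, 2, 2, 2; 0, 1, 0, 2, 0, 2],
    lineOf !![1, 0, 0, 0, 0, 1; 0, 1, 0, 0, 2, 1],
    lineOf !![1, 0, 1, 0, 2, 2; 0, 1, 0, 1, 0, 2],
    lineOf !![0, 0, 1, 0, 1, 2; 0, 0, 0, 1, 1, 0],
    lineOf !![1, 0, 0, 2, 1, 0; 0, 1, 1, 1, 0, 1],
    lineOf !![0, 0, 1, 0, 1, 1; 0, 0, 0, 1, 2, 0],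
    lineOf !![1, 0, 2, 0, 0, 0; 0, 1, 2, 2, 0, 0],
    lineOf !![1, 0, 1, 2, 0, 0; 0, 1, 1, 0, 0, 0],
    lineOf !![1, 0, 1, 0, 0, 0; 0, 1, 0, 1, 0, 0],
    lineOf !![1, 0, 2, 0, 2, 0; 0, 1, 2, 2, 2, 2],
    lineOf !![1, 0, 0, 0, 1, 0; 0, 1, 0, 0, 0, 1],
    lineOf !![0, 0, 1, 0, 1, 0; 0, 0, 0, 1, 0, 1],
    lineOf !![1, 0, 0, 0, 2, 2; 0, 1, 0, 0, 0, 2],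
    lineOf !![1, 0, 2, 0, 1, 0; 0, 1, 2, 2, 0, 1],
    lineOf !![1, 0, 1, 0, 1, 1; 0, 1, 0, 1, 2, 0]]

/-- Mathon's perp-system: the six lines `m₁, …, m₆` together with the fifteen lines
of `F₁₅`. -/
def MathonSet : Set (Submodule F3 V6) := Set.range mline ∪ Set.range f15

def mats21 : Fin 21 → Matrix (Fin 2) (Fin 6) F3 :=
  ![!![1, 0, 1, 2, 2, 0; 0, 1, 1, 0, 2, 2],
    !![1, 0, 1, 2, 1, 1; 0, 1, 1, 0, 2, 0],
    !![1, 0, 0, 2, 0, 1; 0, 1, 1, 1, 2, 1],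
    !![1, 0, 0, 2, 2, 0; 0, 1, 1, 1, 2, 2],
    !![1, 0, 2, 2, 1, 1; 0, 1, 0, 2, 2, 0],
    !![1, 0, 2, 2, 0, 1; 0, 1, 0, 2, 2, 1],
    !![1, 0, 2, 2, 2, 2; 0, 1, 0, 2, 0, 2],
    !![1, 0, 0, 0, 0, 1; 0, 1, 0, 0, 2, 1],
    !![1, 0, 1, 0, 2, 2; 0, 1, 0, 1, 0, 2],
    !![0, 0, 1, 0, 1, 2; 0, 0, 0, 1, 1, 0],
    !![1, 0, 0, 2, 1, 0; 0, 1, 1, 1, 0, 1],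
    !![0, 0, 1, 0, 1, 1; 0, 0, 0, 1, 2, 0],
    !![1, 0, 2, 0, 0, 0; 0, 1, 2, 2, 0, 0],
    !![1, 0, 1, 2, 0, 0; 0, 1, 1, 0, 0, 0],
    !![1, 0, 1, 0, 0, 0; 0, 1, 0, 1, 0, 0],
    !![1, 0, 2, 0, 2, 0; 0, 1, 2, 2, 2, 2],
    !![1, 0, 0, 0, 1, 0; 0, 1, 0, 0, 0, 1],
    !![0, 0, 1, 0, 1, 0; 0, 0, 0, 1, 0, 1],
    !![1, 0, 0, 0, 2, 2; 0, 1, 0, 0, 0, 2],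
    !![1, 0, 2, 0, 1, 0; 0, 1, 2, 2, 0, 1],
    !![1, 0, 1, 0, 1, 1; 0, 1, 0, 1, 2, 0]]

def LineF : Fin 21 → Submodule F3 V6 := fun i => lineOf (mats21 i)

lemma mem_lineOf {A : Matrix (Fin 2) (Fin 6) F3} {x : V6} :
    x ∈ lineOf A ↔ ∃ a b : F3, a • A 0 + b • A 1 = x := by
  have h : Set.range A = {A 0, A 1} := by
    ext y; constructor
    · rintro ⟨i, rfl⟩; fin_cases i <;> simp
    · rintro (rfl | rfl)
      · exact ⟨0, rfl⟩
      · exact ⟨1, rfl⟩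
  rw [lineOf, h, Submodule.mem_span_pair]

set_option maxHeartbeats 40000000 in
lemma hdisj : ∀ i j : Fin 21, i < j → ∀ a b c d : F3,
    a • mats21 i 0 + b • mats21 i 1 = c • mats21 j 0 + d • mats21 j 1 →
    a = 0 ∧ b = 0 := by decide

set_option maxHeartbeats 40000000 in
lemma hopp : ∀ i j : Fin 21, ∀ a b : F3,
    (a • mats21 i 0 + b • mats21 i 1) ⬝ᵥ M6.mulVec (mats21 j 0) = 0 →
    (a • mats21 i 0 + b • mats21 i 1) ⬝ᵥ M6.mulVec (mats21 j 1) = 0 →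
    a • mats21 i 0 + b • mats21 i 1 = 0 := by decide

lemma hrow0 : ∀ i : Fin 21, mats21 i 0 ≠ 0 := by decide

lemma key1 : ∀ i j : Fin 21, i ≠ j → LineF i ⊓ LineF j = ⊥ := by
  intro i j hij
  rw [eq_bot_iff]
  rintro x hx
  obtain ⟨hx1, hx2⟩ := Submodule.mem_inf.1 hx
  obtain ⟨a, b, rfl⟩ := mem_lineOf.1 hx1
  obtain ⟨c, d, he⟩ := mem_lineOf.1 hx2
  rcases lt_or_gt_of_ne hij with h | h
  · obtain ⟨rfl, rfl⟩ := hdisj i j h a b c d he.symm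
    simp
  · obtain ⟨rfl, rfl⟩ := hdisj j i h c d a b he
    rw [← he]; simp

lemma mem_perp_lineOf {M : Matrix (Fin 6) (Fin 6) F3} {B : Matrix (Fin 2) (Fin 6) F3}
    {x : V6} : x ∈ perp M (lineOf B) ↔
      x ⬝ᵥ M.mulVec (B 0) = 0 ∧ x ⬝ᵥ M.mulVec (B 1) = 0 := by
  constructor
  · intro h
    exact ⟨h _ (Submodule.subset_span ⟨0, rfl⟩), h _ (Submodule.subset_span ⟨1, rfl⟩)⟩
  · rintro ⟨h0, h1⟩ w hw
    obtain ⟨a, b, rfl⟩ := mem_lineOf.1 hw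
    simp [Matrix.mulVec_add, Matrix.mulVec_smul, h0, h1]

lemma key2 : ∀ i j : Fin 21, LineF i ⊓ perp M6 (LineF j) = ⊥ := by
  intro i j
  rw [eq_bot_iff]
  rintro x hx
  obtain ⟨hx1, hx2⟩ := Submodule.mem_inf.1 hx
  obtain ⟨a, b, rfl⟩ := mem_lineOf.1 hx1
  obtain ⟨h0, h1⟩ := mem_perp_lineOf.1 hx2
  exact (Submodule.mem_bot _).2 (hopp i j a b h0 h1)

lemma lineF_ne_bot (i : Fin 21) : LineF i ≠ ⊥ := by
  intro h
  exact hrow0 i (by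
    have : mats21 i 0 ∈ LineF i := mem_lineOf.2 ⟨1, 0, by simp⟩
    rw [h] at this
    exact (Submodule.mem_bot _).1 this)

lemma lineF_inj : Function.Injective LineF := by
  intro i j h
  by_contra hij
  have := key1 i j hij
  rw [h, inf_idem] at this
  exact lineF_ne_bot j this

lemma hMS : MathonSet = Set.range LineF := by
  ext x
  constructor
  · rintro (⟨i, rfl⟩ | ⟨i, rfl⟩) <;> fin_cases i
    exacts [⟨0, rfl⟩, ⟨1, rfl⟩, ⟨2, rfl⟩, ⟨3, rfl⟩, ⟨4, rfl⟩, ⟨5, rfl⟩, ⟨6, rfl⟩, ⟨7, rfl⟩, ⟨8, rfl⟩, ⟨9, rfl⟩, ⟨10, rfl⟩, ⟨11, rfl⟩, ⟨12, rfl⟩, ⟨13, rfl⟩, ⟨14, rfl⟩, ⟨15, rfl⟩, ⟨16, rfl⟩, ⟨17, rfl⟩, ⟨18, rfl⟩, ⟨19, rfl⟩, ⟨20, rfl⟩]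
  · rintro ⟨i, rfl⟩
    fin_cases i
    exacts [Or.inl ⟨0, rfl⟩, Or.inl ⟨1, rfl⟩, Or.inl ⟨2, rfl⟩, Or.inl ⟨3, rfl⟩, Or.inl ⟨4, rfl⟩, Or.inl ⟨5, rfl⟩, Or.inr ⟨0, rfl⟩, Or.inr ⟨1, rfl⟩, Or.inr ⟨2, rfl⟩, Or.inr ⟨3, rfl⟩, Or.inr ⟨4, rfl⟩, Or.inr ⟨5, rfl⟩, Or.inr ⟨6, rfl⟩, Or.inr ⟨7, rfl⟩, Or.inr ⟨8, rfl⟩, Or.inr ⟨9, rfl⟩, Or.inr ⟨10, rfl⟩, Or.inr ⟨11, rfl⟩, Or.inr ⟨12, rfl⟩, Or.inr ⟨13, rfl⟩, Or.inr ⟨14, rfl⟩]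

/-- The set `𝓜` has exactly 21 elements, its elements are pairwise
disjoint, and every two not necessarily distinct elements of `𝓜` are opposite with
respect to `M₆`; i.e. `𝓜` is a perp-system of `PG(5,3)` for the symplectic polarity
of `M₆`. -/
theorem stmt15 :
    MathonSet.ncard = 21 ∧
    (∀ ℓ ∈ MathonSet, ∀ m ∈ MathonSet, ℓ ≠ m → ℓ ⊓ m = ⊥) ∧
    (∀ ℓ ∈ MathonSet, ∀ m ∈ MathonSet, ℓ ⊓ perp M6 m = ⊥) := by
  constructor
  · rw [hMS, ← Set.image_univ, Set.ncard_image_of_injective _ lineF_inj, Set.ncard_univ]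
    simp
  constructor
  · intro ℓ hℓ m hm hne
    rw [hMS] at hℓ hm
    obtain ⟨i, rfl⟩ := hℓ
    obtain ⟨j, rfl⟩ := hm
    exact key1 i j (fun h => hne (by rw [h]))
  · intro ℓ hℓ m hm
    rw [hMS] at hℓ hm
    obtain ⟨i, rfl⟩ := hℓ
    obtain ⟨j, rfl⟩ := hm
    exact key2 i j
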